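/- Let a_0(z),…,a_{n−1}(z) be holomorphic on the disc D_r(0). Then every formal series solution ψ(z) = ∑_{finite j} z^{s_j} (log z)^{m_j} h_j(z), with h_j formal power series, of the ODE (z d/dz)^n ψ + a_{n−1}(z)(z d/dz)^{n−1} ψ + ⋯ + a_0(z) ψ = 0 converges absolutely in the punctured disc 0 < |z| < r: each h_j converges on D_r(0). -/

import Mathlib

/-- The operator `z d/dz` on coefficient families `c : ℂ → ℕ → ℂ`, where `c α β` is the
coefficient of `z^α (log z)^β`. -/
noncomputable def thetaOp (c : ℂ → ℕ → ℂ) : ℂ → ℕ → ℂ :=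
  fun α β => α * c α β + ((β : ℂ) + 1) * c α (β + 1)

/-- Multiplication of a coefficient family by a power series `a(z)`. -/
noncomputable def mulSeries (a : PowerSeries ℂ) (c : ℂ → ℕ → ℂ) : ℂ → ℕ → ℂ :=
  fun α β => ∑' p : ℕ, (PowerSeries.coeff p a) * c (α - (p : ℂ)) β

/-- The coefficient family of the formal expression `∑_j z^{s_j} (log z)^{m_j} h_j(z)`. -/
noncomputable def expCoeff (J : ℕ) (s : Fin J → ℂ) (m : Fin J → ℕ)
    (h : Fin J → PowerSeries ℂ) : ℂ → ℕ → ℂ :=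
  fun α β => ∑ j : Fin J, ∑' p : ℕ,
    if α = s j + (p : ℂ) ∧ β = m j then PowerSeries.coeff p (h j) else 0

/-- Coefficients in the expansion of `thetaOp^[k]`. -/
def frobW : ℕ → ℕ → ℕ → ℂ
  | 0, 0, _ => 1
  | 0, _ + 1, _ => 0
  | k + 1, 0, β => frobW k 0 β
  | k + 1, i + 1, β => frobW k (i + 1) β + ((β : ℂ) + 1) * frobW k i (β + 1)

lemma frobW_zero : ∀ k β, frobW k 0 β = 1 := by
  intro k
  induction k with
  | zero => intro β; rfl
  | succ k ih => intro β; simpa [frobW] using ih β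

lemma frobW_of_lt : ∀ k i β, k < i → frobW k i β = 0 := by
  intro k
  induction k with
  | zero =>
    rintro (_ | i) β hk
    · omega
    · rfl
  | succ k ih =>
    rintro (_ | i) β hk
    · omega
    · simp [frobW, ih (i + 1) β (by omega), ih i (β + 1) (by omega)]

lemma theta_iter_apply (c : ℂ → ℕ → ℂ) : ∀ (k : ℕ) (α : ℂ) (β : ℕ),
    thetaOp^[k] c α β = ∑ i ∈ Finset.range (k + 1), frobW k i β * α ^ (k - i) * c α (β + i) := by
  intro k
  induction k with
  | zero => intro α β; simp [frobW]
  | succ k ih =>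
    intro α β
    rw [Function.iterate_succ_apply']
    show α * (thetaOp^[k] c) α β + ((β : ℂ) + 1) * (thetaOp^[k] c) α (β + 1) = _
    rw [ih α β, ih α (β + 1)]
    have hA : α * ∑ i ∈ Finset.range (k + 1), frobW k i β * α ^ (k - i) * c α (β + i)
        = α * (frobW k 0 β * α ^ k * c α β)
          + ∑ i ∈ Finset.range (k + 1), frobW k (i + 1) β * α ^ (k - i) * c α (β + (i + 1)) := by
      rw [Finset.mul_sum,
        Finset.sum_range_succ' (fun i => α * (frobW k i β * α ^ (k - i) * c α (β + i))),
        Finset.sum_range_succ (fun i => frobW k (i + 1) β * α ^ (k - i) * c α (β + (i + 1))),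
        frobW_of_lt k (k + 1) β (by omega)]
      simp only [Nat.sub_zero, add_zero, zero_mul, mul_zero]
      rw [add_comm]
      congr 1
      apply Finset.sum_congr rfl
      intro i hi
      simp only [Finset.mem_range] at hi
      have h3 : k - (i + 1) + 1 = k - i := by omega
      rw [show α ^ (k - i) = α ^ (k - (i + 1)) * α from by rw [← pow_succ, h3]]
      ring
    have hB : ((β : ℂ) + 1) * ∑ i ∈ Finset.range (k + 1),
          frobW k i (β + 1) * α ^ (k - i) * c α (β + 1 + i)
        = ∑ i ∈ Finset.range (k + 1),
            ((β : ℂ) + 1) * frobW k i (β + 1) * α ^ (k - i) * c α (β + (i + 1)) := by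
      rw [Finset.mul_sum]
      apply Finset.sum_congr rfl
      intro i _
      rw [show β + 1 + i = β + (i + 1) from by omega]
      ring
    rw [hA, hB, add_assoc, ← Finset.sum_add_distrib,
      Finset.sum_range_succ' (fun i => frobW (k + 1) i β * α ^ (k + 1 - i) * c α (β + i)),
      add_comm (α * (frobW k 0 β * α ^ k * c α β))]
    congr 1
    · apply Finset.sum_congr rfl
      intro i hi
      have h1 : frobW (k + 1) (i + 1) β
          = frobW k (i + 1) β + ((β : ℂ) + 1) * frobW k i (β + 1) := rfl
      have h2 : k + 1 - (i + 1) = k - i := by omega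
      rw [h1, h2]
      ring
    · rw [frobW_zero, frobW_zero]
      simp [pow_succ]
      ring



open Classical in
lemma expCoeff_apply (J : ℕ) (s : Fin J → ℂ) (m : Fin J → ℕ) (hh : Fin J → PowerSeries ℂ)
    (α : ℂ) (β : ℕ) :
    expCoeff J s m hh α β = ∑ j : Fin J,
      if hc : ∃ p : ℕ, α = s j + (p : ℂ) ∧ β = m j
      then PowerSeries.coeff hc.choose (hh j) else 0 := by
  unfold expCoeff
  classical
  apply Finset.sum_congr rfl
  intro j _
  by_cases hc : ∃ p : ℕ, α = s j + (p : ℂ) ∧ β = m j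
  · rw [dif_pos hc]
    obtain ⟨hp1, hp2⟩ := hc.choose_spec
    rw [tsum_eq_single hc.choose ?_, if_pos ⟨hp1, hp2⟩]
    intro b hb
    rw [if_neg]
    rintro ⟨h1, h2⟩
    exact hb (Nat.cast_injective (add_left_cancel (h1.symm.trans hp1)))
  · rw [dif_neg hc,
      show (fun p : ℕ => if α = s j + (p : ℂ) ∧ β = m j then PowerSeries.coeff p (hh j) else 0)
        = fun _ => (0 : ℂ) from funext fun b => if_neg fun hb => hc ⟨b, hb⟩, tsum_zero]

lemma geom_aux (x : ℝ) (h0 : 0 ≤ x) (h1 : x < 1) (p : ℕ) :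
    ∑ q ∈ Finset.range p, x ^ (q + 1) ≤ x / (1 - x) := by
  have hs : Summable (fun q : ℕ => x ^ (q+1)) := by
    apply Summable.comp_injective (summable_geometric_of_lt_one h0 h1)
    exact fun a b => by omega
  calc ∑ q ∈ Finset.range p, x ^ (q + 1) ≤ ∑' q : ℕ, x ^ (q + 1) := by
        apply Summable.sum_le_tsum _ (fun i _ => by positivity) hs
    _ = x * ∑' q : ℕ, x ^ q := by rw [← tsum_mul_left]; congr 1; ext q; ring
    _ = x / (1 - x) := by rw [tsum_geometric_of_lt_one h0 h1]; field_simp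

lemma indicial_bound (n : ℕ) (hn : 0 < n) (b : ℕ → ℂ) (s₀ : ℂ) (T : ℝ) :
    ∃ N : ℕ, ∀ p : ℕ, N ≤ p →
      T * (‖s₀‖ + p + 1) ^ (n - 1)
        ≤ ‖(s₀ + (p : ℂ)) ^ n + ∑ k ∈ Finset.range n, b k * (s₀ + (p : ℂ)) ^ k‖ := by
  set B := ∑ k ∈ Finset.range n, ‖b k‖ with hB
  have hB0 : 0 ≤ B := Finset.sum_nonneg fun k _ => norm_nonneg _
  refine ⟨⌈‖s₀‖ + (2 * ‖s₀‖ + 1) + B + |T| * 2 ^ (n - 1) + 1⌉₊, fun p hp => ?_⟩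
  set x := ‖s₀ + (p : ℂ)‖ with hx
  have hpc : ‖s₀‖ + (2 * ‖s₀‖ + 1) + B + |T| * 2 ^ (n - 1) + 1 ≤ (p : ℝ) := by
    calc _ ≤ (⌈‖s₀‖ + (2 * ‖s₀‖ + 1) + B + |T| * 2 ^ (n - 1) + 1⌉₊ : ℝ) := Nat.le_ceil _
      _ ≤ (p : ℝ) := by exact_mod_cast hp
  have hxp : (p : ℝ) - ‖s₀‖ ≤ x := by
    have : ‖(p : ℂ)‖ - ‖s₀‖ ≤ ‖s₀ + (p : ℂ)‖ := by
      have := norm_sub_le (s₀ + (p : ℂ)) s₀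
      simp only [add_sub_cancel_left] at this
      linarith [this]
    simpa using this
  have hx1 : (2 * ‖s₀‖ + 1) + B + |T| * 2 ^ (n - 1) + 1 ≤ x := by linarith
  have habs : (0:ℝ) ≤ |T| * 2 ^ (n - 1) := by positivity
  have hs0 : (0:ℝ) ≤ ‖s₀‖ := norm_nonneg _
  have hxpos : (1 : ℝ) ≤ x := by linarith
  have hn' : n - 1 + 1 = n := Nat.succ_pred_eq_of_pos hn
  have hsum : ‖∑ k ∈ Finset.range n, b k * (s₀ + (p : ℂ)) ^ k‖ ≤ B * x ^ (n - 1) := by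
    calc ‖∑ k ∈ Finset.range n, b k * (s₀ + (p : ℂ)) ^ k‖
        ≤ ∑ k ∈ Finset.range n, ‖b k * (s₀ + (p : ℂ)) ^ k‖ := norm_sum_le _ _
      _ ≤ ∑ k ∈ Finset.range n, ‖b k‖ * x ^ (n - 1) := by
          apply Finset.sum_le_sum
          intro k hk
          rw [norm_mul, norm_pow]
          apply mul_le_mul_of_nonneg_left _ (norm_nonneg _)
          exact pow_le_pow_right₀ hxpos (by simp only [Finset.mem_range] at hk; omega)
      _ = B * x ^ (n - 1) := by rw [hB, Finset.sum_mul]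
  have hP : x ^ n - B * x ^ (n - 1)
      ≤ ‖(s₀ + (p : ℂ)) ^ n + ∑ k ∈ Finset.range n, b k * (s₀ + (p : ℂ)) ^ k‖ := by
    have h1 : ‖(s₀ + (p : ℂ)) ^ n‖
        ≤ ‖(s₀ + (p : ℂ)) ^ n + ∑ k ∈ Finset.range n, b k * (s₀ + (p : ℂ)) ^ k‖
          + ‖∑ k ∈ Finset.range n, b k * (s₀ + (p : ℂ)) ^ k‖ := by
      have := norm_sub_le ((s₀ + (p : ℂ)) ^ n + ∑ k ∈ Finset.range n, b k * (s₀ + (p : ℂ)) ^ k)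
        (∑ k ∈ Finset.range n, b k * (s₀ + (p : ℂ)) ^ k)
      simpa using this
    rw [norm_pow] at h1
    linarith
  have h2x : ‖s₀‖ + (p:ℝ) + 1 ≤ 2 * x := by linarith
  have hy0 : (0:ℝ) ≤ (‖s₀‖ + (p:ℝ) + 1) ^ (n - 1) := by positivity
  calc T * (‖s₀‖ + (p:ℝ) + 1) ^ (n - 1) ≤ |T| * (2 * x) ^ (n - 1) := by
        calc T * (‖s₀‖ + (p:ℝ) + 1) ^ (n - 1) ≤ |T| * (‖s₀‖ + (p:ℝ) + 1) ^ (n - 1) :=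
              mul_le_mul_of_nonneg_right (le_abs_self T) hy0
          _ ≤ |T| * (2 * x) ^ (n - 1) :=
              mul_le_mul_of_nonneg_left (pow_le_pow_left₀ (by positivity) h2x _) (abs_nonneg T)
    _ = |T| * 2 ^ (n - 1) * x ^ (n - 1) := by rw [mul_pow]; ring
    _ ≤ (x - B) * x ^ (n - 1) :=
        mul_le_mul_of_nonneg_right (by linarith) (by positivity)
    _ = x ^ n - B * x ^ (n - 1) := by
        rw [show x ^ n = x ^ (n-1) * x from by rw [← pow_succ, hn']]; ring
    _ ≤ _ := hP

set_option maxHeartbeats 2000000 in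
/-- Regular singular points: if `a_0(z), …, a_{n-1}(z)` are holomorphic on the disc
`|z| < r` (i.e. their Taylor series converge absolutely there), then every formal
series solution `ψ(z) = ∑_j z^{s_j} (log z)^{m_j} h_j(z)` of
`(z d/dz)^n ψ + a_{n-1}(z) (z d/dz)^{n-1} ψ + ⋯ + a_0(z) ψ = 0`
converges absolutely in `0 < |z| < r`: each `h_j` converges on the disc `|z| < r`. -/
theorem stmt13 (n : ℕ) (hn : 0 < n) (r : ℝ) (hr : 0 < r)
    (a : ℕ → PowerSeries ℂ)
    (ha : ∀ k < n, ∀ z : ℂ, ‖z‖ < r →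
      Summable (fun p : ℕ => ‖PowerSeries.coeff p (a k)‖ * ‖z‖ ^ p))
    (J : ℕ) (s : Fin J → ℂ) (m : Fin J → ℕ) (h : Fin J → PowerSeries ℂ)
    (hdistinct : ∀ j j' : Fin J, (∃ k : ℤ, s j - s j' = (k : ℂ)) → m j = m j' → j = j')
    (hODE : (thetaOp^[n] (expCoeff J s m h)) +
      (∑ k ∈ Finset.range n, mulSeries (a k) (thetaOp^[k] (expCoeff J s m h))) = 0) :
    ∀ j : Fin J, ∀ z : ℂ, ‖z‖ < r →
      Summable (fun p : ℕ => ‖PowerSeries.coeff p (h j)‖ * ‖z‖ ^ p) := by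
  classical
  intro j₀ z hz
  -- residue class setup
  set d : Fin J → ℤ := fun j => if hc : ∃ k : ℤ, s j - s j₀ = (k : ℂ) then hc.choose else 0
    with hd_def
  have hdE : ∀ j : Fin J, (∃ k : ℤ, s j - s j₀ = (k : ℂ)) → s j - s j₀ = (d j : ℂ) := by
    intro j hj
    simp only [hd_def, dif_pos hj]
    exact hj.choose_spec
  set E : Finset (Fin J) := Finset.univ.filter (fun j => ∃ k : ℤ, s j - s j₀ = (k : ℂ))
    with hE_def
  have hj₀E : j₀ ∈ E := by
    simp only [hE_def, Finset.mem_filter, Finset.mem_univ, true_and]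
    exact ⟨0, by simp⟩
  have hEne : (E.image d).Nonempty := ⟨d j₀, Finset.mem_image_of_mem d hj₀E⟩
  set dmin : ℤ := (E.image d).min' hEne with hdmin_def
  set s₀ : ℂ := s j₀ + dmin with hs₀_def
  set e : Fin J → ℕ := fun j => (d j - dmin).toNat with he_def
  have hse : ∀ j ∈ E, s j = s₀ + (e j : ℂ) := by
    intro j hj
    have hdj : s j - s j₀ = (d j : ℂ) := by
      apply hdE
      simpa only [hE_def, Finset.mem_filter, Finset.mem_univ, true_and] using hj
    have hmin : dmin ≤ d j := Finset.min'_le _ _ (Finset.mem_image_of_mem d hj)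
    have htn : ((d j - dmin).toNat : ℤ) = d j - dmin := Int.toNat_of_nonneg (by omega)
    have : ((e j : ℤ) : ℂ) = ((d j - dmin : ℤ) : ℂ) := by
      rw [he_def]; exact_mod_cast congrArg (fun t : ℤ => (t : ℂ)) htn
    push_cast at this ⊢
    rw [hs₀_def]
    rw [this]
    push_cast
    linear_combination hdj
  -- class membership from exponent equations
  have hclass : ∀ (j : Fin J) (w : ℤ) (p' : ℕ), s₀ + (w : ℂ) = s j + (p' : ℂ) →
      j ∈ E ∧ (w : ℂ) = (e j : ℂ) + (p' : ℂ) := by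
    intro j w p' hw
    have hjE : j ∈ E := by
      simp only [hE_def, Finset.mem_filter, Finset.mem_univ, true_and]
      refine ⟨dmin + w - p', ?_⟩
      push_cast
      rw [hs₀_def] at hw
      push_cast at hw
      linear_combination -hw
    refine ⟨hjE, ?_⟩
    have := hse j hjE
    rw [this] at hw
    linear_combination hw
  -- vanishing lemmas
  have Z1 : ∀ (p q : ℕ), p < q → ∀ β, expCoeff J s m h (s₀ + (p : ℂ) - (q : ℂ)) β = 0 := by
    intro p q hpq β
    rw [expCoeff_apply]
    apply Finset.sum_eq_zero
    intro j _
    rw [dif_neg]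
    rintro ⟨p', hp', -⟩
    have hw : s₀ + (((p : ℤ) - q : ℤ) : ℂ) = s j + (p' : ℂ) := by
      push_cast
      linear_combination hp'
    obtain ⟨hjE, hEq⟩ := hclass j ((p : ℤ) - q) p' hw
    have : (p : ℤ) - q = (e j : ℤ) + p' := by exact_mod_cast hEq
    omega
  set M : ℕ := Finset.univ.sup m with hM_def
  have Z2 : ∀ (α : ℂ) (β : ℕ), M < β → expCoeff J s m h α β = 0 := by
    intro α β hβ
    rw [expCoeff_apply]
    apply Finset.sum_eq_zero
    intro j _
    rw [dif_neg]
    rintro ⟨p', -, hm⟩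
    have : m j ≤ M := Finset.le_sup (Finset.mem_univ j)
    omega
  have Zθ : ∀ (k : ℕ) (p q : ℕ), p < q → ∀ β,
      thetaOp^[k] (expCoeff J s m h) (s₀ + (p : ℂ) - (q : ℂ)) β = 0 := by
    intro k p q hpq β
    rw [theta_iter_apply]
    apply Finset.sum_eq_zero
    intro i _
    rw [Z1 p q hpq (β + i), mul_zero]
  have E1 : ∀ j ∈ E, ∀ p : ℕ,
      expCoeff J s m h (s₀ + ((p + e j : ℕ) : ℂ)) (m j) = PowerSeries.coeff p (h j) := by
    intro j hjE p
    rw [expCoeff_apply]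
    rw [Finset.sum_eq_single j ?hothers ?habs]
    case habs => intro habs; exact absurd (Finset.mem_univ j) habs
    case hothers =>
      intro j' _ hne
      rw [dif_neg]
      rintro ⟨p', hp', hm⟩
      have hw : s₀ + (((p + e j : ℕ) : ℤ) : ℂ) = s j' + (p' : ℂ) := by
        push_cast
        push_cast at hp'
        linear_combination hp'
      obtain ⟨hj'E, -⟩ := hclass j' ((p + e j : ℕ) : ℤ) p' hw
      apply hne
      apply hdistinct j' j _ hm.symm
      refine ⟨(e j' : ℤ) - (e j : ℤ), ?_⟩
      rw [hse j' hj'E, hse j hjE]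
      push_cast
      ring
    · have hc : ∃ p' : ℕ, s₀ + ((p + e j : ℕ) : ℂ) = s j + (p' : ℂ) ∧ m j = m j := by
        refine ⟨p, ?_, rfl⟩
        rw [hse j hjE]
        push_cast
        ring
      rw [dif_pos hc]
      have h1 := (hc.choose_spec).1
      have h2 := hse j hjE
      set pc := hc.choose with hpc
      push_cast at h1
      have hpp : (pc : ℂ) = (p : ℂ) := by linear_combination -h1 - h2
      have hch : pc = p := by exact_mod_cast hpp
      exact congrArg (fun t => (PowerSeries.coeff t) (h j)) hch
  set D : ℕ → ℕ → ℂ := fun p β => expCoeff J s m h (s₀ + (p : ℂ)) β with hD_def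
  have heq : ∀ (p : ℕ) (β : ℕ),
      (∑ i ∈ Finset.range (n + 1), frobW n i β * (s₀ + (p : ℂ)) ^ (n - i) * D p (β + i))
      + ∑ k ∈ Finset.range n, ∑ q ∈ Finset.range (p + 1), (PowerSeries.coeff q (a k))
          * ∑ i ∈ Finset.range (k + 1),
              frobW k i β * (s₀ + (p : ℂ) - (q : ℂ)) ^ (k - i) * D (p - q) (β + i) = 0 := by
    intro p β
    have h0 := congrFun (congrFun hODE (s₀ + (p : ℂ))) β
    simp only [Pi.add_apply, Finset.sum_apply, Pi.zero_apply] at h0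
    rw [theta_iter_apply] at h0
    have hMS : ∀ k ∈ Finset.range n,
        mulSeries (a k) (thetaOp^[k] (expCoeff J s m h)) (s₀ + (p : ℂ)) β
        = ∑ q ∈ Finset.range (p + 1), (PowerSeries.coeff q (a k))
            * ∑ i ∈ Finset.range (k + 1),
                frobW k i β * (s₀ + (p : ℂ) - (q : ℂ)) ^ (k - i) * D (p - q) (β + i) := by
      intro k _
      show (∑' q : ℕ, (PowerSeries.coeff q (a k))
          * thetaOp^[k] (expCoeff J s m h) (s₀ + (p : ℂ) - (q : ℂ)) β) = _
      rw [tsum_eq_sum (s := Finset.range (p + 1)) ?_]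
      · apply Finset.sum_congr rfl
        intro q hq
        simp only [Finset.mem_range] at hq
        have hq' : q ≤ p := by omega
        congr 1
        rw [theta_iter_apply]
        apply Finset.sum_congr rfl
        intro i _
        have harg : s₀ + (p : ℂ) - (q : ℂ) = s₀ + ((p - q : ℕ) : ℂ) := by
          push_cast [Nat.cast_sub hq']
          ring
        rw [harg]
      · intro q hq
        simp only [Finset.mem_range, not_lt] at hq
        rw [Zθ k p q (by omega) β, mul_zero]
    rw [Finset.sum_congr rfl hMS] at h0
    exact h0
  have hiso : ∀ (p : ℕ) (β : ℕ),
      ((s₀ + (p : ℂ)) ^ n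
          + ∑ k ∈ Finset.range n, (PowerSeries.coeff 0 (a k)) * (s₀ + (p : ℂ)) ^ k) * D p β
      = -((∑ i ∈ Finset.range n,
              frobW n (i + 1) β * (s₀ + (p : ℂ)) ^ (n - (i + 1)) * D p (β + (i + 1)))
        + (∑ k ∈ Finset.range n, (PowerSeries.coeff 0 (a k)) *
            ∑ i ∈ Finset.range k,
              frobW k (i + 1) β * (s₀ + (p : ℂ)) ^ (k - (i + 1)) * D p (β + (i + 1)))
        + ∑ k ∈ Finset.range n, ∑ q ∈ Finset.range p, (PowerSeries.coeff (q + 1) (a k))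
            * ∑ i ∈ Finset.range (k + 1),
                frobW k i β * (s₀ + (p : ℂ) - ((q + 1 : ℕ) : ℂ)) ^ (k - i)
                  * D (p - (q + 1)) (β + i)) := by
    intro p β
    have h0 := heq p β
    rw [Finset.sum_range_succ'
      (fun i => frobW n i β * (s₀ + (p : ℂ)) ^ (n - i) * D p (β + i))] at h0
    have hk : ∀ k ∈ Finset.range n,
        (∑ q ∈ Finset.range (p + 1), (PowerSeries.coeff q (a k))
            * ∑ i ∈ Finset.range (k + 1),
                frobW k i β * (s₀ + (p : ℂ) - (q : ℂ)) ^ (k - i) * D (p - q) (β + i))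
        = ((PowerSeries.coeff 0 (a k)) * (s₀ + (p : ℂ)) ^ k) * D p β
          + ((PowerSeries.coeff 0 (a k)) * ∑ i ∈ Finset.range k,
              frobW k (i + 1) β * (s₀ + (p : ℂ)) ^ (k - (i + 1)) * D p (β + (i + 1)))
          + ∑ q ∈ Finset.range p, (PowerSeries.coeff (q + 1) (a k))
              * ∑ i ∈ Finset.range (k + 1),
                  frobW k i β * (s₀ + (p : ℂ) - ((q + 1 : ℕ) : ℂ)) ^ (k - i)
                    * D (p - (q + 1)) (β + i) := by
      intro k _
      rw [Finset.sum_range_succ' (fun q => (PowerSeries.coeff q (a k))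
          * ∑ i ∈ Finset.range (k + 1),
              frobW k i β * (s₀ + (p : ℂ) - (q : ℂ)) ^ (k - i) * D (p - q) (β + i))]
      simp only [Nat.cast_zero, sub_zero, Nat.sub_zero]
      rw [Finset.sum_range_succ'
        (fun i => frobW k i β * (s₀ + (p : ℂ)) ^ (k - i) * D p (β + i))]
      rw [frobW_zero]
      simp only [Nat.sub_zero, add_zero, one_mul]
      ring
    rw [Finset.sum_congr rfl hk, Finset.sum_add_distrib, Finset.sum_add_distrib,
      ← Finset.sum_mul] at h0
    rw [frobW_zero] at h0
    simp only [Nat.sub_zero, add_zero, one_mul] at h0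
    linear_combination h0
  -- radius and coefficient bounds
  set ρ₁ : ℝ := (‖z‖ + r) / 2 with hρ₁_def
  have hzρ₁ : ‖z‖ < ρ₁ := by
    rw [hρ₁_def]; linarith
  have hρ₁r : ρ₁ < r := by
    rw [hρ₁_def]; linarith
  have hρ₁0 : 0 < ρ₁ := lt_of_le_of_lt (norm_nonneg z) hzρ₁
  clear_value ρ₁
  obtain ⟨A, hA1, hA⟩ : ∃ A : ℝ, 1 ≤ A ∧ ∀ k < n, ∀ q : ℕ,
      ‖PowerSeries.coeff q (a k)‖ * ρ₁ ^ q ≤ A := by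
    have hsum : ∀ k, k < n → Summable (fun q : ℕ => ‖PowerSeries.coeff q (a k)‖ * ρ₁ ^ q) := by
      intro k hk
      have := ha k hk ((ρ₁ : ℂ)) (by
        rw [Complex.norm_real]
        rw [Real.norm_of_nonneg hρ₁0.le]
        exact hρ₁r)
      simpa [Complex.norm_real, Real.norm_of_nonneg hρ₁0.le, abs_of_nonneg hρ₁0.le] using this
    have hbdd : ∀ k, k < n → BddAbove (Set.range fun q : ℕ =>
        ‖PowerSeries.coeff q (a k)‖ * ρ₁ ^ q) := by
      intro k hk
      have ht := (hsum k hk).tendsto_atTop_zero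
      exact ht.bddAbove_range
    refine ⟨1 + ∑ k ∈ Finset.range n,
      |sSup (Set.range fun q : ℕ => ‖PowerSeries.coeff q (a k)‖ * ρ₁ ^ q)|, ?_, ?_⟩
    · have : (0:ℝ) ≤ ∑ k ∈ Finset.range n, |sSup (Set.range fun q : ℕ =>
          ‖PowerSeries.coeff q (a k)‖ * ρ₁ ^ q)| :=
        Finset.sum_nonneg fun k _ => abs_nonneg _
      linarith
    · intro k hk q
      have h1 : ‖PowerSeries.coeff q (a k)‖ * ρ₁ ^ q
          ≤ sSup (Set.range fun q : ℕ => ‖PowerSeries.coeff q (a k)‖ * ρ₁ ^ q) :=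
        le_csSup (hbdd k hk) (Set.mem_range_self q)
      have h2 : sSup (Set.range fun q : ℕ => ‖PowerSeries.coeff q (a k)‖ * ρ₁ ^ q)
          ≤ ∑ k' ∈ Finset.range n, |sSup (Set.range fun q : ℕ =>
              ‖PowerSeries.coeff q (a k')‖ * ρ₁ ^ q)| := by
        calc sSup (Set.range fun q : ℕ => ‖PowerSeries.coeff q (a k)‖ * ρ₁ ^ q)
            ≤ |sSup (Set.range fun q : ℕ => ‖PowerSeries.coeff q (a k)‖ * ρ₁ ^ q)| :=
              le_abs_self _
          _ ≤ _ := Finset.single_le_sum (f := fun k' => |sSup (Set.range fun q : ℕ =>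
                ‖PowerSeries.coeff q (a k')‖ * ρ₁ ^ q)|)
              (fun k' _ => abs_nonneg _) (Finset.mem_range.mpr hk)
      linarith
  -- bound on frobW values
  set Λ : ℝ := 1 + ∑ k ∈ Finset.range (n + 1), ∑ i ∈ Finset.range (n + 1),
      ∑ b ∈ Finset.range (M + n + 2), ‖frobW k i b‖ with hΛ_def
  have hΛ1 : 1 ≤ Λ := by
    rw [hΛ_def]
    have : (0:ℝ) ≤ ∑ k ∈ Finset.range (n + 1), ∑ i ∈ Finset.range (n + 1),
        ∑ b ∈ Finset.range (M + n + 2), ‖frobW k i b‖ :=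
      Finset.sum_nonneg fun _ _ => Finset.sum_nonneg fun _ _ =>
        Finset.sum_nonneg fun _ _ => norm_nonneg _
    linarith
  have hΛ : ∀ k i b : ℕ, k ≤ n → i ≤ n → b ≤ M + n + 1 → ‖frobW k i b‖ ≤ Λ := by
    intro k i b hk hi hb
    rw [hΛ_def]
    have h1 : ‖frobW k i b‖ ≤ ∑ k' ∈ Finset.range (n + 1), ∑ i' ∈ Finset.range (n + 1),
        ∑ b' ∈ Finset.range (M + n + 2), ‖frobW k' i' b'‖ := by
      calc ‖frobW k i b‖
          ≤ ∑ b' ∈ Finset.range (M + n + 2), ‖frobW k i b'‖ :=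
            Finset.single_le_sum (fun _ _ => norm_nonneg _) (Finset.mem_range.mpr (by omega))
        _ ≤ ∑ i' ∈ Finset.range (n + 1), ∑ b' ∈ Finset.range (M + n + 2), ‖frobW k i' b'‖ :=
            Finset.single_le_sum
              (f := fun i' => ∑ b' ∈ Finset.range (M + n + 2), ‖frobW k i' b'‖)
              (fun _ _ => Finset.sum_nonneg fun _ _ => norm_nonneg _)
              (Finset.mem_range.mpr (by omega))
        _ ≤ _ :=
            Finset.single_le_sum
              (f := fun k' => ∑ i' ∈ Finset.range (n + 1),
                ∑ b' ∈ Finset.range (M + n + 2), ‖frobW k' i' b'‖)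
              (fun _ _ => Finset.sum_nonneg fun _ _ =>
                Finset.sum_nonneg fun _ _ => norm_nonneg _)
              (Finset.mem_range.mpr (by omega))
    linarith
  clear_value Λ
  -- the main inductive bound
  have key : ∀ t : ℕ, ∃ ρ' C : ℝ, ‖z‖ < ρ' ∧ ρ' < ρ₁ ∧ 1 ≤ C ∧
      ∀ β p : ℕ, M + 1 ≤ β + t → ‖D p β‖ ≤ C / ρ' ^ p := by
    intro t
    induction t with
    | zero =>
      refine ⟨(‖z‖ + ρ₁) / 2, 1, by linarith, by linarith, le_refl 1, ?_⟩
      intro β p hβ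
      have h0 : D p β = 0 := Z2 (s₀ + (p : ℂ)) β (by omega)
      rw [h0, norm_zero]
      positivity
    | succ t ih =>
      obtain ⟨ρ'', C'', hz'', hρ''ρ₁, hC''1, hIH⟩ := ih
      have hρ''0 : 0 < ρ'' := lt_of_le_of_lt (norm_nonneg z) hz''
      set ρ' : ℝ := (‖z‖ + ρ'') / 2 with hρ'_def
      have hρ'z : ‖z‖ < ρ' := by rw [hρ'_def]; linarith
      have hρ'ρ'' : ρ' < ρ'' := by rw [hρ'_def]; linarith
      have hρ'ρ₁ : ρ' < ρ₁ := by linarith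
      have hρ'0 : 0 < ρ' := lt_of_le_of_lt (norm_nonneg z) hρ'z
      clear_value ρ'
      set β₀ : ℕ := M - t with hβ₀_def
      set x : ℝ := ρ' / ρ₁ with hx_def
      have hx0 : 0 ≤ x := by positivity
      have hx1 : x < 1 := by rw [hx_def, div_lt_one hρ₁0]; exact hρ'ρ₁
      clear_value x
      set g : ℝ := x / (1 - x) with hg_def
      have hg0 : 0 ≤ g := by
        rw [hg_def]
        apply div_nonneg hx0 (by linarith)
      clear_value g
      have hΛ0 : (0:ℝ) ≤ Λ := by linarith
      have hA0 : (0:ℝ) ≤ A := by linarith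
      set V : ℝ := n * Λ + n * n * A * Λ + n * (n + 1) * Λ * A * g + 1 with hV_def
      have hV1 : 1 ≤ V := by
        rw [hV_def]
        have h1 : (0:ℝ) ≤ n * Λ := by positivity
        have h2 : (0:ℝ) ≤ n * n * A * Λ := by positivity
        have h3 : (0:ℝ) ≤ n * (n + 1) * Λ * A * g := by positivity
        linarith
      clear_value V
      obtain ⟨N, hN⟩ := indicial_bound n hn (fun k => PowerSeries.coeff 0 (a k)) s₀ (2 * V)
      set C : ℝ := C'' + 1 + ∑ p' ∈ Finset.range N, ‖D p' β₀‖ * ρ' ^ p' with hC_def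
      have hsum0 : 0 ≤ ∑ p' ∈ Finset.range N, ‖D p' β₀‖ * ρ' ^ p' :=
        Finset.sum_nonneg fun p' _ => by positivity
      have hCC'' : C'' ≤ C := by rw [hC_def]; linarith
      have hC1 : 1 ≤ C := by linarith
      have hC0 : 0 < C := by linarith
      clear_value C
      have hhigh : ∀ (i p : ℕ), 1 ≤ i → ‖D p (β₀ + i)‖ ≤ C / ρ' ^ p := by
        intro i p hi
        calc ‖D p (β₀ + i)‖ ≤ C'' / ρ'' ^ p := hIH (β₀ + i) p (by omega)
          _ ≤ C / ρ' ^ p :=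
            div_le_div₀ hC0.le hCC'' (pow_pos hρ'0 p) (pow_le_pow_left₀ hρ'0.le hρ'ρ''.le p)
      have crit : ∀ p : ℕ, ‖D p β₀‖ ≤ C / ρ' ^ p := by
        intro p
        induction p using Nat.strong_induction_on with
        | _ p IHp =>
        by_cases hpN : p < N
        · rw [le_div_iff₀ (pow_pos hρ'0 p)]
          calc ‖D p β₀‖ * ρ' ^ p
              ≤ ∑ p' ∈ Finset.range N, ‖D p' β₀‖ * ρ' ^ p' :=
                Finset.single_le_sum (f := fun p' => ‖D p' β₀‖ * ρ' ^ p')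
                  (fun p' _ => by positivity) (Finset.mem_range.mpr hpN)
            _ ≤ C := by rw [hC_def]; linarith
        · push_neg at hpN
          set Y : ℝ := ‖s₀‖ + p + 1 with hY_def
          have hY1 : (1:ℝ) ≤ Y := by
            rw [hY_def]
            have := norm_nonneg s₀
            have : (0:ℝ) ≤ (p:ℝ) := Nat.cast_nonneg p
            linarith [norm_nonneg s₀]
          have hY0 : (0:ℝ) ≤ Y := by linarith
          clear_value Y
          have hfac0 : (0:ℝ) ≤ Y ^ (n - 1) * (C / ρ' ^ p) := by positivity
          have hYn : ∀ (w : ℂ) (u : ℕ), ‖w‖ ≤ Y → u ≤ n - 1 → ‖w ^ u‖ ≤ Y ^ (n - 1) := by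
            intro w u hw hu
            rw [norm_pow]
            calc ‖w‖ ^ u ≤ Y ^ u := pow_le_pow_left₀ (norm_nonneg w) hw u
              _ ≤ Y ^ (n - 1) := pow_le_pow_right₀ hY1 hu
          have hw0 : ‖s₀ + (p : ℂ)‖ ≤ Y := by
            calc ‖s₀ + (p : ℂ)‖ ≤ ‖s₀‖ + ‖(p : ℂ)‖ := norm_add_le _ _
              _ ≤ Y := by
                rw [Complex.norm_natCast, hY_def]
                linarith
          have hwb : ∀ q' : ℕ, q' ≤ p → ‖s₀ + (p : ℂ) - ((q' : ℕ) : ℂ)‖ ≤ Y := by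
            intro q' hq'
            calc ‖s₀ + (p : ℂ) - (q' : ℂ)‖ ≤ ‖s₀‖ + ‖(p : ℂ) - (q' : ℂ)‖ := by
                  rw [add_sub_assoc]
                  exact norm_add_le _ _
              _ ≤ Y := by
                  rw [show (p : ℂ) - (q' : ℂ) = ((p - q' : ℕ) : ℂ) from by
                    push_cast [Nat.cast_sub hq']
                    ring]
                  rw [Complex.norm_natCast, hY_def]
                  have : ((p - q' : ℕ) : ℝ) ≤ (p : ℝ) := by exact_mod_cast Nat.sub_le p q'
                  linarith
          -- bound T1
          have hT1 : ‖∑ i ∈ Finset.range n,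
                frobW n (i + 1) β₀ * (s₀ + (p : ℂ)) ^ (n - (i + 1)) * D p (β₀ + (i + 1))‖
              ≤ (n * Λ) * (Y ^ (n - 1) * (C / ρ' ^ p)) := by
            calc ‖∑ i ∈ Finset.range n,
                frobW n (i + 1) β₀ * (s₀ + (p : ℂ)) ^ (n - (i + 1)) * D p (β₀ + (i + 1))‖
                ≤ ∑ i ∈ Finset.range n,
                  ‖frobW n (i + 1) β₀ * (s₀ + (p : ℂ)) ^ (n - (i + 1)) * D p (β₀ + (i + 1))‖ :=
                  norm_sum_le _ _
              _ ≤ ∑ i ∈ Finset.range n, Λ * (Y ^ (n - 1) * (C / ρ' ^ p)) := by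
                  apply Finset.sum_le_sum
                  intro i hi
                  simp only [Finset.mem_range] at hi
                  rw [norm_mul, norm_mul]
                  have t1 : ‖frobW n (i + 1) β₀‖ ≤ Λ := hΛ n (i + 1) β₀ le_rfl (by omega) (by omega)
                  have t2 : ‖(s₀ + (p : ℂ)) ^ (n - (i + 1))‖ ≤ Y ^ (n - 1) :=
                    hYn _ _ hw0 (by omega)
                  have t3 : ‖D p (β₀ + (i + 1))‖ ≤ C / ρ' ^ p := hhigh (i + 1) p (by omega)
                  have step1 : ‖frobW n (i + 1) β₀‖ * ‖(s₀ + (p : ℂ)) ^ (n - (i + 1))‖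
                      ≤ Λ * Y ^ (n - 1) :=
                    mul_le_mul t1 t2 (norm_nonneg _) hΛ0
                  refine le_trans (mul_le_mul step1 t3 (norm_nonneg _) (by positivity))
                    (le_of_eq (by ring))
              _ = (n * Λ) * (Y ^ (n - 1) * (C / ρ' ^ p)) := by
                  simp only [Finset.sum_const, Finset.card_range, nsmul_eq_mul]
                  ring
          -- bound T2
          have hT2 : ‖∑ k ∈ Finset.range n, (PowerSeries.coeff 0 (a k)) *
                ∑ i ∈ Finset.range k,
                  frobW k (i + 1) β₀ * (s₀ + (p : ℂ)) ^ (k - (i + 1)) * D p (β₀ + (i + 1))‖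
              ≤ (n * n * A * Λ) * (Y ^ (n - 1) * (C / ρ' ^ p)) := by
            calc ‖∑ k ∈ Finset.range n, (PowerSeries.coeff 0 (a k)) *
                ∑ i ∈ Finset.range k,
                  frobW k (i + 1) β₀ * (s₀ + (p : ℂ)) ^ (k - (i + 1)) * D p (β₀ + (i + 1))‖
                ≤ ∑ k ∈ Finset.range n, ‖(PowerSeries.coeff 0 (a k)) *
                  ∑ i ∈ Finset.range k,
                    frobW k (i + 1) β₀ * (s₀ + (p : ℂ)) ^ (k - (i + 1)) * D p (β₀ + (i + 1))‖ :=
                  norm_sum_le _ _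
              _ ≤ ∑ k ∈ Finset.range n, A * (n * (Λ * (Y ^ (n - 1) * (C / ρ' ^ p)))) := by
                  apply Finset.sum_le_sum
                  intro k hk
                  simp only [Finset.mem_range] at hk
                  rw [norm_mul]
                  have hcf : ‖PowerSeries.coeff 0 (a k)‖ ≤ A := by
                    have := hA k hk 0
                    simpa using this
                  have hin : ‖∑ i ∈ Finset.range k,
                      frobW k (i + 1) β₀ * (s₀ + (p : ℂ)) ^ (k - (i + 1)) * D p (β₀ + (i + 1))‖
                      ≤ n * (Λ * (Y ^ (n - 1) * (C / ρ' ^ p))) := by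
                    calc ‖∑ i ∈ Finset.range k,
                        frobW k (i + 1) β₀ * (s₀ + (p : ℂ)) ^ (k - (i + 1)) * D p (β₀ + (i + 1))‖
                        ≤ ∑ i ∈ Finset.range k, ‖frobW k (i + 1) β₀
                            * (s₀ + (p : ℂ)) ^ (k - (i + 1)) * D p (β₀ + (i + 1))‖ :=
                          norm_sum_le _ _
                      _ ≤ ∑ i ∈ Finset.range k, Λ * (Y ^ (n - 1) * (C / ρ' ^ p)) := by
                          apply Finset.sum_le_sum
                          intro i hi
                          simp only [Finset.mem_range] at hi
                          rw [norm_mul, norm_mul]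
                          have t1 : ‖frobW k (i + 1) β₀‖ ≤ Λ :=
                            hΛ k (i + 1) β₀ (by omega) (by omega) (by omega)
                          have t2 : ‖(s₀ + (p : ℂ)) ^ (k - (i + 1))‖ ≤ Y ^ (n - 1) :=
                            hYn _ _ hw0 (by omega)
                          have t3 : ‖D p (β₀ + (i + 1))‖ ≤ C / ρ' ^ p := hhigh (i + 1) p (by omega)
                          have step1 : ‖frobW k (i + 1) β₀‖ * ‖(s₀ + (p : ℂ)) ^ (k - (i + 1))‖
                              ≤ Λ * Y ^ (n - 1) :=
                            mul_le_mul t1 t2 (norm_nonneg _) hΛ0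
                          refine le_trans (mul_le_mul step1 t3 (norm_nonneg _) (by positivity))
                            (le_of_eq (by ring))
                      _ ≤ n * (Λ * (Y ^ (n - 1) * (C / ρ' ^ p))) := by
                          simp only [Finset.sum_const, Finset.card_range, nsmul_eq_mul]
                          apply mul_le_mul_of_nonneg_right _ (by positivity)
                          exact_mod_cast Nat.cast_le.mpr hk.le
                  exact mul_le_mul hcf hin (norm_nonneg _) hA0
              _ = (n * n * A * Λ) * (Y ^ (n - 1) * (C / ρ' ^ p)) := by
                  simp only [Finset.sum_const, Finset.card_range, nsmul_eq_mul]
                  ring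
          -- bound T3
          have hT3 : ‖∑ k ∈ Finset.range n, ∑ q ∈ Finset.range p,
                (PowerSeries.coeff (q + 1) (a k))
                * ∑ i ∈ Finset.range (k + 1),
                    frobW k i β₀ * (s₀ + (p : ℂ) - ((q + 1 : ℕ) : ℂ)) ^ (k - i)
                      * D (p - (q + 1)) (β₀ + i)‖
              ≤ (n * (n + 1) * Λ * A * g) * (Y ^ (n - 1) * (C / ρ' ^ p)) := by
            have hterm : ∀ k ∈ Finset.range n, ∀ q ∈ Finset.range p,
                ‖(PowerSeries.coeff (q + 1) (a k))
                  * ∑ i ∈ Finset.range (k + 1),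
                      frobW k i β₀ * (s₀ + (p : ℂ) - ((q + 1 : ℕ) : ℂ)) ^ (k - i)
                        * D (p - (q + 1)) (β₀ + i)‖
                ≤ ((n + 1) * Λ * A) * (Y ^ (n - 1) * (C / ρ' ^ p)) * x ^ (q + 1) := by
              intro k hk q hq
              simp only [Finset.mem_range] at hk hq
              have hqp : q + 1 ≤ p := by omega
              have hpow : ρ' ^ (p - (q + 1)) * ρ' ^ (q + 1) = ρ' ^ p := by
                rw [← pow_add]
                congr 1
                omega
              rw [norm_mul]
              have hcf : ‖PowerSeries.coeff (q + 1) (a k)‖ ≤ A / ρ₁ ^ (q + 1) := by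
                rw [le_div_iff₀ (pow_pos hρ₁0 (q + 1))]
                exact hA k hk (q + 1)
              have hin : ‖∑ i ∈ Finset.range (k + 1),
                  frobW k i β₀ * (s₀ + (p : ℂ) - ((q + 1 : ℕ) : ℂ)) ^ (k - i)
                    * D (p - (q + 1)) (β₀ + i)‖
                  ≤ (n + 1) * (Λ * (Y ^ (n - 1) * (C / ρ' ^ (p - (q + 1))))) := by
                calc ‖∑ i ∈ Finset.range (k + 1),
                    frobW k i β₀ * (s₀ + (p : ℂ) - ((q + 1 : ℕ) : ℂ)) ^ (k - i)
                      * D (p - (q + 1)) (β₀ + i)‖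
                    ≤ ∑ i ∈ Finset.range (k + 1), ‖frobW k i β₀
                        * (s₀ + (p : ℂ) - ((q + 1 : ℕ) : ℂ)) ^ (k - i)
                        * D (p - (q + 1)) (β₀ + i)‖ := norm_sum_le _ _
                  _ ≤ ∑ i ∈ Finset.range (k + 1), Λ * (Y ^ (n - 1) * (C / ρ' ^ (p - (q + 1)))) := by
                      apply Finset.sum_le_sum
                      intro i hi
                      simp only [Finset.mem_range] at hi
                      rw [norm_mul, norm_mul]
                      have t1 : ‖frobW k i β₀‖ ≤ Λ := hΛ k i β₀ (by omega) (by omega) (by omega)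
                      have t2 : ‖(s₀ + (p : ℂ) - ((q + 1 : ℕ) : ℂ)) ^ (k - i)‖ ≤ Y ^ (n - 1) :=
                        hYn _ _ (hwb (q + 1) hqp) (by omega)
                      have t3 : ‖D (p - (q + 1)) (β₀ + i)‖ ≤ C / ρ' ^ (p - (q + 1)) := by
                        rcases Nat.eq_zero_or_pos i with hi0 | hi1
                        · subst hi0
                          simp only [add_zero]
                          exact IHp (p - (q + 1)) (by omega)
                        · exact hhigh i (p - (q + 1)) hi1
                      have step1 : ‖frobW k i β₀‖
                          * ‖(s₀ + (p : ℂ) - ((q + 1 : ℕ) : ℂ)) ^ (k - i)‖ ≤ Λ * Y ^ (n - 1) :=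
                        mul_le_mul t1 t2 (norm_nonneg _) hΛ0
                      refine le_trans (mul_le_mul step1 t3 (norm_nonneg _) (by positivity))
                        (le_of_eq (by ring))
                  _ ≤ (n + 1) * (Λ * (Y ^ (n - 1) * (C / ρ' ^ (p - (q + 1))))) := by
                      simp only [Finset.sum_const, Finset.card_range, nsmul_eq_mul]
                      apply mul_le_mul_of_nonneg_right _ (by positivity)
                      have : (k:ℝ) + 1 ≤ (n:ℝ) + 1 := by
                        have : (k:ℝ) ≤ (n:ℝ) := by exact_mod_cast hk.le
                        linarith
                      exact_mod_cast this
              have hiden : (A / ρ₁ ^ (q + 1)) * ((n + 1) * (Λ * (Y ^ (n - 1)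
                    * (C / ρ' ^ (p - (q + 1))))))
                  = ((n + 1) * Λ * A) * (Y ^ (n - 1) * (C / ρ' ^ p)) * x ^ (q + 1) := by
                have hinv : C / ρ' ^ (p - (q + 1)) = C * ρ' ^ (q + 1) / ρ' ^ p := by
                  rw [← hpow, show C * ρ' ^ (q + 1) = ρ' ^ (q + 1) * C from mul_comm _ _,
                    show ρ' ^ (p - (q + 1)) * ρ' ^ (q + 1)
                      = ρ' ^ (q + 1) * ρ' ^ (p - (q + 1)) from mul_comm _ _,
                    mul_div_mul_left _ _ (ne_of_gt (pow_pos hρ'0 (q + 1)))]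
                rw [hinv, hx_def, div_pow]
                ring
              refine le_trans (mul_le_mul hcf hin (norm_nonneg _) (by positivity))
                (le_of_eq hiden)
            calc ‖∑ k ∈ Finset.range n, ∑ q ∈ Finset.range p,
                (PowerSeries.coeff (q + 1) (a k))
                * ∑ i ∈ Finset.range (k + 1),
                    frobW k i β₀ * (s₀ + (p : ℂ) - ((q + 1 : ℕ) : ℂ)) ^ (k - i)
                      * D (p - (q + 1)) (β₀ + i)‖
                ≤ ∑ k ∈ Finset.range n, ∑ q ∈ Finset.range p,
                  ‖(PowerSeries.coeff (q + 1) (a k))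
                  * ∑ i ∈ Finset.range (k + 1),
                      frobW k i β₀ * (s₀ + (p : ℂ) - ((q + 1 : ℕ) : ℂ)) ^ (k - i)
                        * D (p - (q + 1)) (β₀ + i)‖ := by
                  calc _ ≤ ∑ k ∈ Finset.range n, ‖∑ q ∈ Finset.range p,
                      (PowerSeries.coeff (q + 1) (a k))
                      * ∑ i ∈ Finset.range (k + 1),
                          frobW k i β₀ * (s₀ + (p : ℂ) - ((q + 1 : ℕ) : ℂ)) ^ (k - i)
                            * D (p - (q + 1)) (β₀ + i)‖ := norm_sum_le _ _
                    _ ≤ _ := Finset.sum_le_sum fun k _ => norm_sum_le _ _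
              _ ≤ ∑ k ∈ Finset.range n, ∑ q ∈ Finset.range p,
                  ((n + 1) * Λ * A) * (Y ^ (n - 1) * (C / ρ' ^ p)) * x ^ (q + 1) :=
                  Finset.sum_le_sum fun k hk => Finset.sum_le_sum fun q hq => hterm k hk q hq
              _ ≤ ∑ k ∈ Finset.range n, ((n + 1) * Λ * A) * (Y ^ (n - 1) * (C / ρ' ^ p)) * g := by
                  apply Finset.sum_le_sum
                  intro k _
                  rw [← Finset.mul_sum, hg_def]
                  apply mul_le_mul_of_nonneg_left (geom_aux x hx0 hx1 p) (by positivity)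
              _ = (n * (n + 1) * Λ * A * g) * (Y ^ (n - 1) * (C / ρ' ^ p)) := by
                  simp only [Finset.sum_const, Finset.card_range, nsmul_eq_mul]
                  ring
          -- combine
          have hPD := hiso p β₀
          have hnormPD : ‖(s₀ + (p : ℂ)) ^ n
                + ∑ k ∈ Finset.range n, (PowerSeries.coeff 0 (a k)) * (s₀ + (p : ℂ)) ^ k‖
                * ‖D p β₀‖
              ≤ V * (Y ^ (n - 1) * (C / ρ' ^ p)) := by
            rw [← norm_mul, hPD, norm_neg]
            refine le_trans norm_add₃_le ?_
            refine le_trans (add_le_add (add_le_add hT1 hT2) hT3) ?_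
            rw [hV_def]
            nlinarith [hfac0]
          have hNp := hN p hpN
          rw [← hY_def] at hNp
          have hVY0 : 0 < V * Y ^ (n - 1) := by positivity
          have h1 : (V * Y ^ (n - 1)) * (2 * ‖D p β₀‖)
              ≤ (V * Y ^ (n - 1)) * (C / ρ' ^ p) := by
            calc (V * Y ^ (n - 1)) * (2 * ‖D p β₀‖)
                = (2 * V * Y ^ (n - 1)) * ‖D p β₀‖ := by ring
              _ ≤ ‖(s₀ + (p : ℂ)) ^ n + ∑ k ∈ Finset.range n,
                    (PowerSeries.coeff 0 (a k)) * (s₀ + (p : ℂ)) ^ k‖ * ‖D p β₀‖ :=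
                  mul_le_mul_of_nonneg_right hNp (norm_nonneg _)
              _ ≤ V * (Y ^ (n - 1) * (C / ρ' ^ p)) := hnormPD
              _ = (V * Y ^ (n - 1)) * (C / ρ' ^ p) := by ring
          have h2 : 2 * ‖D p β₀‖ ≤ C / ρ' ^ p := le_of_mul_le_mul_left h1 hVY0
          linarith [norm_nonneg (D p β₀)]
      refine ⟨ρ', C, hρ'z, hρ'ρ₁, hC1, ?_⟩
      intro β p hβ
      by_cases hβt : M + 1 ≤ β + t
      · calc ‖D p β‖ ≤ C'' / ρ'' ^ p := hIH β p hβt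
          _ ≤ C / ρ' ^ p :=
            div_le_div₀ hC0.le hCC'' (pow_pos hρ'0 p) (pow_le_pow_left₀ hρ'0.le hρ'ρ''.le p)
      · have hββ₀ : β = β₀ := by omega
        rw [hββ₀]
        exact crit p
  -- conclusion
  obtain ⟨ρ', C, hρ'z, hρ'ρ₁, hC1, hbound⟩ := key (M + 1)
  have hρ'0 : 0 < ρ' := lt_of_le_of_lt (norm_nonneg z) hρ'z
  have hcoeff : ∀ p : ℕ, ‖PowerSeries.coeff p (h j₀)‖ ≤ (C / ρ' ^ (e j₀)) / ρ' ^ p := by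
    intro p
    have hE1 := E1 j₀ hj₀E p
    have hb := hbound (m j₀) (p + e j₀) (by omega)
    rw [hD_def] at hb
    have : ‖PowerSeries.coeff p (h j₀)‖ ≤ C / ρ' ^ (p + e j₀) := by
      rw [← hE1]
      exact_mod_cast hb
    calc ‖PowerSeries.coeff p (h j₀)‖ ≤ C / ρ' ^ (p + e j₀) := this
      _ = (C / ρ' ^ (e j₀)) / ρ' ^ p := by
          rw [pow_add, div_div, mul_comm]
  have hgs : Summable (fun p : ℕ => (C / ρ' ^ (e j₀)) * (‖z‖ / ρ') ^ p) := by
    apply Summable.mul_left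
    exact summable_geometric_of_lt_one (by positivity) (by
      rw [div_lt_one hρ'0]
      exact hρ'z)
  refine Summable.of_nonneg_of_le (fun p => by positivity) (fun p => ?_) hgs
  · calc ‖PowerSeries.coeff p (h j₀)‖ * ‖z‖ ^ p
        ≤ ((C / ρ' ^ (e j₀)) / ρ' ^ p) * ‖z‖ ^ p :=
          mul_le_mul_of_nonneg_right (hcoeff p) (by positivity)
      _ = (C / ρ' ^ (e j₀)) * (‖z‖ / ρ') ^ p := by
          rw [div_pow]
          ring
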